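/- arXiv:2112.09519 — 3 statements merged into one kernel-verified Lean document; each statement's English description precedes it below -/
import Mathlib

section
/- Let p(a) be the joint density of random vectors (a_1,…,a_J), and for each j let π(j) ⊆ {1,…,j−1} and φ(j) ⊆ {1,…,j−1} be disjoint index sets. Define q₁(a) = ∏_j p(a_j | a_{π(j)}) and q₂(a) = ∏_j p(a_j | a_{π(j)}, a_{φ(j)}). Then KL(p ‖ q₁) − KL(p ‖ q₂) = Σ_{j=1}^J I(a_j ; a_{φ(j)} | a_{π(j)}) ≥ 0, where I denotes conditional mutual information under p. -/
open MeasureTheory Filter Function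
open scoped ENNReal

lemma aux_ennreal (a b k : ℝ≥0∞) : a * (b / (k * a)) ≤ b / k := by
  rcases eq_or_ne a 0 with rfl | ha0
  · simp
  rcases eq_or_ne a ⊤ with rfl | hat
  · rcases eq_or_ne k 0 with rfl | hk0
    · rcases eq_or_ne b 0 with rfl | hb0
      · simp
      · simp [ENNReal.div_zero hb0]
    · have h : (⊤ : ℝ≥0∞) * (b / (k * ⊤)) = 0 := by
        rw [ENNReal.mul_top hk0, ENNReal.div_top, mul_zero]
      simp [h]
  · refine le_of_eq ?_
    rw [← mul_div_assoc, mul_comm k a]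
    exact ENNReal.mul_div_mul_left b k ha0 hat

lemma qmp_ae {α β : Type*} [MeasurableSpace α] [MeasurableSpace β] {μ : Measure α}
    {ν : Measure β} {f : α → β} (hf : Measure.QuasiMeasurePreserving f μ ν)
    {P : β → Prop} (h : ∀ᵐ y ∂ν, P y) : ∀ᵐ x ∂μ, P (f x) := by
  rw [ae_iff] at h ⊢
  exact hf.preimage_null h

lemma lmarginal_compl_eq {J : ℕ} (S : Finset (Fin J)) (f : (Fin J → ℝ) → ℝ≥0∞) (x : Fin J → ℝ) :
    (∫⋯∫⁻_Sᶜ, f) x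
      = ∫⁻ v : {i : Fin J // i ∉ S} → ℝ, f (fun i => if h : i ∈ S then x i else v ⟨i, h⟩) := by
  classical
  let ee : {i : Fin J // i ∉ S} ≃ {i : Fin J // i ∈ Sᶜ} :=
    Equiv.subtypeEquivRight (fun i => (Finset.mem_compl (a := i)).symm)
  have mp2 := measurePreserving_piCongrLeft (fun _ : {i : Fin J // i ∈ Sᶜ} => (volume : Measure ℝ)) ee
  rw [lmarginal, ← mp2.map_eq, lintegral_map_equiv, volume_pi]
  apply lintegral_congr
  intro v
  congr 1
  funext i
  by_cases h : i ∈ S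
  · have h2 : i ∉ Sᶜ := by simp [h]
    simp [Function.updateFinset, h2, h]
  · have h2 : i ∈ Sᶜ := Finset.mem_compl.mpr h
    simp only [Function.updateFinset, h2, dif_pos, h, dif_neg, not_false_iff]
    have he : (⟨i, h2⟩ : {i : Fin J // i ∈ Sᶜ}) = ee ⟨i, h⟩ := rfl
    rw [he, MeasurableEquiv.piCongrLeft_apply_apply]

/-- The gain in KL divergence when each factorized conditional `p(a_j | a_{π(j)})` is
enriched to `p(a_j | a_{π(j)}, a_{φ(j)})` equals the sum of the conditional mutual
informations `I(a_j ; a_{φ(j)} | a_{π(j)})`, which is nonnegative.  Here `m S` denotes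
the marginal density of the coordinates in `S` under the joint density `p`. -/
theorem kl_difference_is_conditional_mutual_information {J : ℕ}
    (p : (Fin J → ℝ) → ℝ)
    (m : Finset (Fin J) → (Fin J → ℝ) → ℝ)
    (π φ : Fin J → Finset (Fin J))
    (hπ : ∀ j, ∀ i ∈ π j, i < j) (hφ : ∀ j, ∀ i ∈ φ j, i < j)
    (hdisj : ∀ j, Disjoint (π j) (φ j))
    (hppos : ∀ x, 0 < p x)
    (hpint : Integrable p)
    (hpone : (∫ x : Fin J → ℝ, p x) = 1)
    (hm : ∀ (S : Finset (Fin J)) (x : Fin J → ℝ),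
      m S x = ∫ y : {i : Fin J // i ∉ S} → ℝ,
        p (fun i => if h : i ∈ S then x i else y ⟨i, h⟩))
    (hint1 : Integrable (fun x => p x *
      Real.log (p x / ∏ j, (m (insert j (π j)) x / m (π j) x))))
    (hint2 : Integrable (fun x => p x *
      Real.log (p x / ∏ j, (m (insert j (π j ∪ φ j)) x / m (π j ∪ φ j) x))))
    (hintI : ∀ j, Integrable (fun x => p x *
      Real.log ((m (insert j (π j ∪ φ j)) x * m (π j) x) /
        (m (insert j (π j)) x * m (π j ∪ φ j) x)))) :
    ((∫ x : Fin J → ℝ, p x *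
        Real.log (p x / ∏ j, (m (insert j (π j)) x / m (π j) x)))
      - (∫ x : Fin J → ℝ, p x *
        Real.log (p x / ∏ j, (m (insert j (π j ∪ φ j)) x / m (π j ∪ φ j) x)))
        = ∑ j, ∫ x : Fin J → ℝ, p x *
            Real.log ((m (insert j (π j ∪ φ j)) x * m (π j) x) /
              (m (insert j (π j)) x * m (π j ∪ φ j) x))) ∧
    (0 ≤ ∑ j, ∫ x : Fin J → ℝ, p x *
        Real.log ((m (insert j (π j ∪ φ j)) x * m (π j) x) /
          (m (insert j (π j)) x * m (π j ∪ φ j) x))) := by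
  classical
  -- measurable representative of `p`
  set p' : (Fin J → ℝ) → ℝ := hpint.1.mk p with hp'def
  have hp'meas : Measurable p' := hpint.1.stronglyMeasurable_mk.measurable
  have hpp' : p =ᵐ[volume] p' := hpint.1.ae_eq_mk
  set Pe : (Fin J → ℝ) → ℝ≥0∞ := fun x => ENNReal.ofReal (p' x) with hPedef
  have hPemeas : Measurable Pe := hp'meas.ennreal_ofReal
  have hPe1 : ∫⁻ x, Pe x = 1 := by
    have h0 : ∫⁻ x, ENNReal.ofReal (p x) = ENNReal.ofReal (∫ x, p x) :=
      (ofReal_integral_eq_lintegral_ofReal hpint (ae_of_all _ fun x => (hppos x).le)).symm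
    have h1 : ∫⁻ x, Pe x = ∫⁻ x, ENNReal.ofReal (p x) :=
      lintegral_congr_ae ((hpp'.fun_comp ENNReal.ofReal).symm)
    rw [h1, h0, hpone, ENNReal.ofReal_one]
  have key : ∀ S : Finset (Fin J), ∀ᵐ x : (Fin J → ℝ) ∂volume,
      0 < m S x ∧ ENNReal.ofReal (m S x) = (∫⋯∫⁻_Sᶜ, Pe) x := by
    intro S
    set e := MeasurableEquiv.piEquivPiSubtypeProd (fun _ : Fin J => ℝ) (· ∈ S) with hedef
    have mp : MeasurePreserving e volume
        ((volume : Measure ({x : Fin J // x ∈ S} → ℝ)).prod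
          (volume : Measure ({i : Fin J // ¬ i ∈ S} → ℝ))) := by
      have h := measurePreserving_piEquivPiSubtypeProd
        (fun _ : Fin J => (volume : Measure ℝ)) (· ∈ S)
      convert h using 2 <;> (try rw [volume_pi]) <;> congr!
    have mps := MeasurePreserving.symm e mp
    have hg : Integrable (fun z => p (e.symm z))
        ((volume : Measure ({i : Fin J // i ∈ S} → ℝ)).prod
          (volume : Measure ({i : Fin J // ¬ i ∈ S} → ℝ))) := by
      have h2 := (integrable_map_equiv e.symm p).mp (by rwa [mps.map_eq])
      exact h2
    have h1 : ∀ᵐ u ∂(volume : Measure ({i : Fin J // i ∈ S} → ℝ)),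
        Integrable (fun v => p (e.symm (u, v))) := hg.prod_right_ae
    have h2 : ∀ᵐ z ∂((volume : Measure ({i : Fin J // i ∈ S} → ℝ)).prod
        (volume : Measure ({i : Fin J // ¬ i ∈ S} → ℝ))),
        p (e.symm z) = p' (e.symm z) :=
      mps.quasiMeasurePreserving.ae_eq_comp hpp'
    have h3 := Measure.ae_ae_of_ae_prod h2
    have hGood := h1.and h3
    have hqf : Measure.QuasiMeasurePreserving (fun x : Fin J → ℝ => (e x).1) volume volume :=
      Measure.quasiMeasurePreserving_fst.comp mp.quasiMeasurePreserving
    have hae := qmp_ae hqf hGood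
    filter_upwards [hae] with x hx
    obtain ⟨hint_sec, heq_sec⟩ := hx
    have hrepr : ∀ v : {i : Fin J // i ∉ S} → ℝ,
        (fun i => if h : i ∈ S then x i else v ⟨i, h⟩) = e.symm ((e x).1, v) := by
      intro v; funext i
      by_cases h : i ∈ S <;>
        simp [hedef, MeasurableEquiv.piEquivPiSubtypeProd, Equiv.piEquivPiSubtypeProd, h]
    have hmx : m S x = ∫ v, p (e.symm ((e x).1, v)) := by
      rw [hm S x]
      refine integral_congr_ae (ae_of_all _ fun v => ?_)
      exact congrArg p (hrepr v)
    have hunivne : (volume : Measure ({i : Fin J // i ∉ S} → ℝ)) Set.univ ≠ 0 := by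
      rw [volume_pi, Measure.pi_univ]
      exact Finset.prod_ne_zero_iff.mpr fun i _ => by simp [Real.volume_univ]
    constructor
    · rw [hmx]
      rw [integral_pos_iff_support_of_nonneg_ae (ae_of_all _ fun v => (hppos _).le) hint_sec]
      have hsupp : (Function.support fun v => p (e.symm ((e x).1, v))) = Set.univ :=
        Set.eq_univ_of_forall fun v => (hppos _).ne'
      rw [hsupp]
      exact pos_iff_ne_zero.mpr hunivne
    · rw [hmx, ofReal_integral_eq_lintegral_ofReal hint_sec (ae_of_all _ fun v => (hppos _).le),
        lmarginal_compl_eq]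
      refine lintegral_congr_ae (heq_sec.mono fun v hv => ?_)
      rw [hPedef]
      dsimp only
      rw [hrepr v, hv]
  have hKEY : ∀ j : Fin J, 0 ≤ ∫ x : Fin J → ℝ, p x *
      Real.log ((m (insert j (π j ∪ φ j)) x * m (π j) x) /
        (m (insert j (π j)) x * m (π j ∪ φ j) x)) := by
    intro j
    set P0 := π j with hP0def
    set A := insert j (π j) with hAdef
    set B := π j ∪ φ j with hBdef
    set C := insert j (π j ∪ φ j) with hCdef
    have hjP0 : j ∉ P0 := fun h => lt_irrefl j (hπ j j h)
    have hjB : j ∉ B := by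
      intro h
      rcases Finset.mem_union.mp h with h | h
      exacts [lt_irrefl j (hπ j j h), lt_irrefl j (hφ j j h)]
    have hjA : j ∈ A := Finset.mem_insert_self _ _
    have hjC : j ∈ C := Finset.mem_insert_self _ _
    have hP0B : P0 ⊆ B := Finset.subset_union_left
    have hAC : A ⊆ C := Finset.insert_subset_insert _ hP0B
    have hBC : B ⊆ C := Finset.subset_insert _ _
    have hP0C : P0 ⊆ C := hP0B.trans hBC
    have hcomplA : insert j Aᶜ = P0ᶜ := Finset.insert_compl_insert hjP0
    set LL : Finset (Fin J) → (Fin J → ℝ) → ℝ≥0∞ := fun S => ∫⋯∫⁻_Sᶜ, Pe with hLLdef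
    have hLLmeas : ∀ S : Finset (Fin J), Measurable (LL S) := fun S => hPemeas.lmarginal _
    set G : (Fin J → ℝ) → ℝ≥0∞ :=
      fun x => (LL A x * LL B x) / (LL P0 x * LL C x) with hGdef
    have hGmeas : Measurable G :=
      ((hLLmeas A).mul (hLLmeas B)).div ((hLLmeas P0).mul (hLLmeas C))
    have hFmeas : Measurable fun x => Pe x * G x := hPemeas.mul hGmeas
    have hLLdep : ∀ (S : Finset (Fin J)) (x y : Fin J → ℝ),
        (∀ i ∈ S, x i = y i) → LL S x = LL S y := by
      intro S x y h
      exact lmarginal_congr _ _ fun i hi => h i (by simpa using hi)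
    -- the main bound
    have hbound : ∫⁻ x, Pe x * G x ≤ 1 := by
      set x₀ : Fin J → ℝ := fun _ => 0 with hx₀def
      have hdisj2 : Disjoint ({j} : Finset (Fin J)) Cᶜ :=
        Finset.disjoint_singleton_left.mpr (by simpa using hjC)
      have hdisj1 : Disjoint B ({j} ∪ Cᶜ) := by
        rw [Finset.disjoint_union_right]
        exact ⟨Finset.disjoint_singleton_right.mpr hjB,
          disjoint_compl_right.mono_left hBC⟩
      have hun : (Finset.univ : Finset (Fin J)) = B ∪ ({j} ∪ Cᶜ) := by
        rw [← Finset.union_assoc, Finset.union_comm B {j}, ← Finset.insert_eq,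
          ← hCdef, Finset.union_compl]
      have e1 : (∫⋯∫⁻_Cᶜ, fun x => Pe x * G x) = fun x => LL C x * G x := by
        funext z
        have hGconst : ∀ w : (i : ↥(Cᶜ : Finset (Fin J))) → ℝ,
            G (Function.updateFinset z Cᶜ w) = G z := by
          intro w
          have hupd : ∀ S : Finset (Fin J), S ⊆ C →
              LL S (Function.updateFinset z Cᶜ w) = LL S z := by
            intro S hS
            refine hLLdep S _ _ fun i hi => ?_
            have hiC : i ∉ (Cᶜ : Finset (Fin J)) := by simpa using hS hi
            simp [Function.updateFinset, hiC]
          rw [hGdef]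
          dsimp only
          rw [hupd A hAC, hupd B hBC, hupd P0 hP0C, hupd C subset_rfl]
        calc (∫⋯∫⁻_Cᶜ, fun x => Pe x * G x) z
            = ∫⁻ w, Pe (Function.updateFinset z Cᶜ w) * G z
              ∂(Measure.pi fun _ : ↥(Cᶜ : Finset (Fin J)) => (volume : Measure ℝ)) := by
              rw [lmarginal]
              exact lintegral_congr fun w => by rw [hGconst w]
          _ = (∫⁻ w, Pe (Function.updateFinset z Cᶜ w)
              ∂(Measure.pi fun _ : ↥(Cᶜ : Finset (Fin J)) => (volume : Measure ℝ))) * G z :=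
              lintegral_mul_const _ (hPemeas.comp measurable_updateFinset)
          _ = LL C z * G z := rfl
      have e2 : ∀ y : Fin J → ℝ, (∫⋯∫⁻_({j} : Finset (Fin J)), fun x => LL C x * G x) y
          ≤ LL B y := by
        intro y
        rw [lmarginal_singleton]
        have hpt : ∀ t : ℝ, LL C (Function.update y j t) * G (Function.update y j t)
            ≤ LL A (Function.update y j t) * (LL B y / LL P0 y) := by
          intro t
          have hBupd : LL B (Function.update y j t) = LL B y :=
            lmarginal_update_of_mem _ (Finset.mem_compl.mpr hjB) _ _ _
          have hP0upd : LL P0 (Function.update y j t) = LL P0 y :=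
            lmarginal_update_of_mem _ (Finset.mem_compl.mpr hjP0) _ _ _
          rw [hGdef]
          dsimp only
          rw [hBupd, hP0upd]
          calc LL C (Function.update y j t) *
              ((LL A (Function.update y j t) * LL B y) / (LL P0 y * LL C (Function.update y j t)))
              ≤ (LL A (Function.update y j t) * LL B y) / LL P0 y := aux_ennreal _ _ _
            _ = LL A (Function.update y j t) * (LL B y / LL P0 y) := mul_div_assoc _ _ _
        calc ∫⁻ t, LL C (Function.update y j t) * G (Function.update y j t)
            ≤ ∫⁻ t, LL A (Function.update y j t) * (LL B y / LL P0 y) := lintegral_mono hpt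
          _ = (∫⁻ t, LL A (Function.update y j t)) * (LL B y / LL P0 y) :=
              lintegral_mul_const _ ((hLLmeas A).comp (measurable_update y))
          _ = LL P0 y * (LL B y / LL P0 y) := by
              have hins : ∫⁻ t, LL A (Function.update y j t)
                  = (∫⋯∫⁻_(insert j Aᶜ), Pe) y :=
                (lmarginal_insert (μ := fun _ => (volume : Measure ℝ)) Pe hPemeas
                  (fun hc => (Finset.mem_compl.mp hc) hjA) y).symm
              rw [hins, hcomplA]
          _ ≤ LL B y := ENNReal.mul_div_le
      calc ∫⁻ x, Pe x * G x
          = (∫⋯∫⁻_Finset.univ, fun x => Pe x * G x) x₀ := by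
            rw [volume_pi] ; exact lintegral_eq_lmarginal_univ x₀
        _ = (∫⋯∫⁻_B, ∫⋯∫⁻_({j} : Finset (Fin J)), ∫⋯∫⁻_Cᶜ, fun x => Pe x * G x) x₀ := by
            rw [hun, lmarginal_union _ _ hFmeas hdisj1, lmarginal_union _ _ hFmeas hdisj2]
        _ ≤ (∫⋯∫⁻_B, LL B) x₀ := by
            refine lmarginal_mono (fun y => ?_) x₀
            rw [e1]
            exact e2 y
        _ = (∫⋯∫⁻_(B ∪ Bᶜ), Pe) x₀ := by
            rw [lmarginal_union _ _ hPemeas disjoint_compl_right]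
        _ = 1 := by
            rw [Finset.union_compl, lmarginal_univ, ← volume_pi]
            exact hPe1
    -- the comparison function
    set s : (Fin J → ℝ) → ℝ := fun x => (Pe x * G x).toReal with hsdef
    have hsmeas : Measurable s := hFmeas.ennreal_toReal
    have hsnn : ∀ x, 0 ≤ s x := fun x => ENNReal.toReal_nonneg
    have hofs : ∫⁻ x, ENNReal.ofReal (s x) ≤ 1 :=
      le_trans (lintegral_mono fun x => ENNReal.ofReal_toReal_le) hbound
    have hsint : Integrable s := by
      refine ⟨hsmeas.aestronglyMeasurable, ?_⟩
      rw [hasFiniteIntegral_iff_norm]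
      calc ∫⁻ x, ENNReal.ofReal ‖s x‖
          = ∫⁻ x, ENNReal.ofReal (s x) := by
            exact lintegral_congr fun x => by rw [Real.norm_of_nonneg (hsnn x)]
        _ ≤ 1 := hofs
        _ < ⊤ := by simp
    have hsle : ∫ x, s x ≤ 1 := by
      rw [integral_eq_lintegral_of_nonneg_ae (ae_of_all _ hsnn) hsmeas.aestronglyMeasurable]
      have h := ENNReal.toReal_mono (by simp) hofs
      simpa using h
    -- a.e. inequality
    have haeineq : ∀ᵐ x ∂(volume : Measure (Fin J → ℝ)),
        p x - s x ≤ p x * Real.log ((m C x * m P0 x) / (m A x * m B x)) := by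
      filter_upwards [key P0, key A, key B, key C, hpp'] with x hP0x hAx hBx hCx hpx
      obtain ⟨hP0pos, hP0eq⟩ := hP0x
      obtain ⟨hApos, hAeq⟩ := hAx
      obtain ⟨hBpos, hBeq⟩ := hBx
      obtain ⟨hCpos, hCeq⟩ := hCx
      have hPex : Pe x = ENNReal.ofReal (p x) := by rw [hPedef]; dsimp only; rw [← hpx]
      have hsx : s x = p x * ((m A x * m B x) / (m P0 x * m C x)) := by
        have hPG : Pe x * G x
            = ENNReal.ofReal (p x * ((m A x * m B x) / (m P0 x * m C x))) := by
          have hAeq' : ENNReal.ofReal (m A x) = LL A x := hAeq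
          have hBeq' : ENNReal.ofReal (m B x) = LL B x := hBeq
          have hP0eq' : ENNReal.ofReal (m P0 x) = LL P0 x := hP0eq
          have hCeq' : ENNReal.ofReal (m C x) = LL C x := hCeq
          rw [hGdef]
          dsimp only
          rw [← hAeq', ← hBeq', ← hP0eq', ← hCeq', hPex,
            ← ENNReal.ofReal_mul hApos.le, ← ENNReal.ofReal_mul hP0pos.le,
            ← ENNReal.ofReal_div_of_pos (mul_pos hP0pos hCpos),
            ← ENNReal.ofReal_mul (hppos x).le]
        rw [hsdef]
        dsimp only
        rw [hPG, ENNReal.toReal_ofReal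
          (mul_nonneg (hppos x).le (div_nonneg (mul_nonneg hApos.le hBpos.le)
            (mul_nonneg hP0pos.le hCpos.le)))]
      rw [hsx]
      have ht : 0 < (m C x * m P0 x) / (m A x * m B x) :=
        div_pos (mul_pos hCpos hP0pos) (mul_pos hApos hBpos)
      have hlog := Real.one_sub_inv_le_log_of_pos ht
      have hmul := mul_le_mul_of_nonneg_left hlog (hppos x).le
      calc p x - p x * ((m A x * m B x) / (m P0 x * m C x))
          = p x * (1 - ((m C x * m P0 x) / (m A x * m B x))⁻¹) := by
            rw [inv_div, mul_comm (m C x) (m P0 x)]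
            ring
        _ ≤ p x * Real.log ((m C x * m P0 x) / (m A x * m B x)) := hmul
    have hmono := integral_mono_ae (hpint.sub hsint) (hintI j) haeineq
    have hfin : (1 : ℝ) - ∫ x, s x ≤ ∫ x : Fin J → ℝ, p x *
        Real.log ((m C x * m P0 x) / (m A x * m B x)) := by
      rw [← hpone, ← integral_sub hpint hsint]
      exact hmono
    linarith
  have haeAll : ∀ᵐ x : (Fin J → ℝ) ∂volume, ∀ j : Fin J,
      (0 < m (π j) x) ∧ (0 < m (insert j (π j)) x) ∧ (0 < m (π j ∪ φ j) x) ∧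
        (0 < m (insert j (π j ∪ φ j)) x) := by
    rw [ae_all_iff]
    intro j
    filter_upwards [key (π j), key (insert j (π j)), key (π j ∪ φ j),
      key (insert j (π j ∪ φ j))] with x h1 h2 h3 h4
    exact ⟨h1.1, h2.1, h3.1, h4.1⟩
  have heqae : (fun x => p x * Real.log (p x / ∏ j, (m (insert j (π j)) x / m (π j) x))
        - p x * Real.log (p x / ∏ j, (m (insert j (π j ∪ φ j)) x / m (π j ∪ φ j) x)))
      =ᵐ[volume] fun x => ∑ j, p x *
        Real.log ((m (insert j (π j ∪ φ j)) x * m (π j) x) /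
          (m (insert j (π j)) x * m (π j ∪ φ j) x)) := by
    filter_upwards [haeAll] with x hx
    have hp0 : p x ≠ 0 := (hppos x).ne'
    have e1 : Real.log (p x / ∏ j, (m (insert j (π j)) x / m (π j) x))
        = Real.log (p x) - ∑ j, (Real.log (m (insert j (π j)) x) - Real.log (m (π j) x)) := by
      rw [Real.log_div hp0
        (Finset.prod_ne_zero_iff.mpr fun j _ => (div_pos (hx j).2.1 (hx j).1).ne'),
        Real.log_prod fun j _ => (div_pos (hx j).2.1 (hx j).1).ne']
      congr 1
      exact Finset.sum_congr rfl fun j _ => Real.log_div (hx j).2.1.ne' (hx j).1.ne'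
    have e2 : Real.log (p x / ∏ j, (m (insert j (π j ∪ φ j)) x / m (π j ∪ φ j) x))
        = Real.log (p x) - ∑ j, (Real.log (m (insert j (π j ∪ φ j)) x)
            - Real.log (m (π j ∪ φ j) x)) := by
      rw [Real.log_div hp0
        (Finset.prod_ne_zero_iff.mpr fun j _ => (div_pos (hx j).2.2.2 (hx j).2.2.1).ne'),
        Real.log_prod fun j _ => (div_pos (hx j).2.2.2 (hx j).2.2.1).ne']
      congr 1
      exact Finset.sum_congr rfl fun j _ => Real.log_div (hx j).2.2.2.ne' (hx j).2.2.1.ne'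
    have e4 : ∑ j, p x * Real.log ((m (insert j (π j ∪ φ j)) x * m (π j) x) /
          (m (insert j (π j)) x * m (π j ∪ φ j) x))
        = ∑ j, p x * ((Real.log (m (insert j (π j ∪ φ j)) x) + Real.log (m (π j) x))
            - (Real.log (m (insert j (π j)) x) + Real.log (m (π j ∪ φ j) x))) := by
      refine Finset.sum_congr rfl fun j _ => ?_
      rw [Real.log_div (mul_ne_zero (hx j).2.2.2.ne' (hx j).1.ne')
          (mul_ne_zero (hx j).2.1.ne' (hx j).2.2.1.ne'),
        Real.log_mul (hx j).2.2.2.ne' (hx j).1.ne',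
        Real.log_mul (hx j).2.1.ne' (hx j).2.2.1.ne']
    have : True := trivial
    rw [e1, e2, e4, ← Finset.mul_sum]
    simp only [Finset.sum_sub_distrib, Finset.sum_add_distrib]
    ring
  constructor
  · rw [← integral_sub hint1 hint2, integral_congr_ae heqae,
      integral_finset_sum Finset.univ (fun j _ => hintI j)]
  · exact Finset.sum_nonneg fun j _ => hKEY j
end

section
/- Let x ∼ N(0, K) on ℝ^M with K positive definite, partition indices as {1,…,M} = ⋃_j blocks, and for each block j with predecessor index set π(j) define Q_j = K_{jj} − K_{j,π(j)} K_{π(j),π(j)}⁻¹ K_{π(j),j}, F_j = K_{j,π(j)} K_{π(j),π(j)}⁻¹, and S = Fᵀ Q⁻¹ F with F unit block lower triangular (blocks −F_j in row j at columns π(j)) and Q = diag(Q_j). Then tr(S K) = M. -/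
open Matrix

/-- Submatrix of `K` on the blocks in `σ` (block index is the first component). -/
noncomputable def subK {J L : ℕ} (K : Matrix (Fin J × Fin L) (Fin J × Fin L) ℝ)
    (σ : Finset (Fin J)) :
    Matrix {p : Fin J × Fin L // p.1 ∈ σ} {p : Fin J × Fin L // p.1 ∈ σ} ℝ :=
  K.submatrix Subtype.val Subtype.val

/-- The block row `K_{j, σ}`. -/
noncomputable def crossK {J L : ℕ} (K : Matrix (Fin J × Fin L) (Fin J × Fin L) ℝ)
    (j : Fin J) (σ : Finset (Fin J)) :
    Matrix (Fin L) {p : Fin J × Fin L // p.1 ∈ σ} ℝ :=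
  Matrix.of fun a q => K (j, a) q.1

/-- The block column `K_{σ, j}`. -/
noncomputable def crossK' {J L : ℕ} (K : Matrix (Fin J × Fin L) (Fin J × Fin L) ℝ)
    (j : Fin J) (σ : Finset (Fin J)) :
    Matrix {p : Fin J × Fin L // p.1 ∈ σ} (Fin L) ℝ :=
  Matrix.of fun q b => K q.1 (j, b)

/-- Regression coefficients `F_j = K_{j,π(j)} K_{π(j),π(j)}⁻¹`. -/
noncomputable def blockF {J L : ℕ} (K : Matrix (Fin J × Fin L) (Fin J × Fin L) ℝ)
    (π : Fin J → Finset (Fin J)) (j : Fin J) :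
    Matrix (Fin L) {p : Fin J × Fin L // p.1 ∈ π j} ℝ :=
  crossK K j (π j) * (subK K (π j))⁻¹

/-- The unit block lower triangular matrix `F` with blocks `−F_j` in block row `j`
at the block columns `π(j)` and identity diagonal blocks. -/
noncomputable def Fmat {J L : ℕ} (K : Matrix (Fin J × Fin L) (Fin J × Fin L) ℝ)
    (π : Fin J → Finset (Fin J)) :
    Matrix (Fin J × Fin L) (Fin J × Fin L) ℝ :=
  Matrix.of fun p q =>
    if p.1 = q.1 then (if p.2 = q.2 then (1 : ℝ) else 0)
    else if h : q.1 ∈ π p.1 then -(blockF K π p.1 p.2 ⟨q, h⟩) else 0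

/-- Conditional covariance (Schur complement)
`Q_j = K_{jj} − K_{j,π(j)} K_{π(j),π(j)}⁻¹ K_{π(j),j}`. -/
noncomputable def Qblk {J L : ℕ} (K : Matrix (Fin J × Fin L) (Fin J × Fin L) ℝ)
    (π : Fin J → Finset (Fin J)) (j : Fin J) : Matrix (Fin L) (Fin L) ℝ :=
  (Matrix.of fun a b => K (j, a) (j, b))
    - crossK K j (π j) * (subK K (π j))⁻¹ * crossK' K j (π j)

/-- The block diagonal matrix `Q = diag(Q_j)`. -/
noncomputable def Qmat {J L : ℕ} (K : Matrix (Fin J × Fin L) (Fin J × Fin L) ℝ)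
    (π : Fin J → Finset (Fin J)) :
    Matrix (Fin J × Fin L) (Fin J × Fin L) ℝ :=
  Matrix.of fun p q => if p.1 = q.1 then Qblk K π p.1 p.2 q.2 else 0

/-- The approximate prior precision `S = Fᵀ Q⁻¹ F`. -/
noncomputable def Smat {J L : ℕ} (K : Matrix (Fin J × Fin L) (Fin J × Fin L) ℝ)
    (π : Fin J → Finset (Fin J)) :
    Matrix (Fin J × Fin L) (Fin J × Fin L) ℝ :=
  (Fmat K π)ᵀ * (Qmat K π)⁻¹ * Fmat K π




lemma sum_dite_subtype {α : Type*} [Fintype α] {P : α → Prop} [DecidablePred P]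
    (f : {a // P a} → ℝ) :
    ∑ a : α, (if h : P a then f ⟨a, h⟩ else 0) = ∑ q : {a // P a}, f q := by
  rw [Finset.sum_dite]
  simp only [Finset.sum_const_zero, add_zero]
  apply Finset.sum_bij
    (fun (x : {x // x ∈ Finset.filter (fun a => P a) Finset.univ}) _ =>
      (⟨x.1, (Finset.mem_filter.mp x.2).2⟩ : {a // P a}))
  · intros; exact Finset.mem_univ _
  · rintro ⟨a, ha⟩ _ ⟨b, hb⟩ _ h; simpa [Subtype.ext_iff] using h
  · rintro ⟨a, ha⟩ _
    exact ⟨⟨a, Finset.mem_filter.mpr ⟨Finset.mem_univ _, ha⟩⟩, Finset.mem_univ _, rfl⟩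
  · intros; rfl

lemma sum_block {J L : ℕ} (j : Fin J) (u : Fin L → ℝ) (g : Fin J × Fin L → ℝ) :
    ∑ p : Fin J × Fin L, (if p.1 = j then u p.2 else 0) * g p = ∑ a, u a * g (j, a) := by
  rw [Fintype.sum_prod_type, Finset.sum_comm]
  simp [ite_mul, Finset.sum_ite_eq]

lemma sum_piblock {J L : ℕ} {σ : Finset (Fin J)} (f : {p : Fin J × Fin L // p.1 ∈ σ} → ℝ)
    (g : Fin J × Fin L → ℝ) :
    ∑ p : Fin J × Fin L, (if h : p.1 ∈ σ then f ⟨p, h⟩ else 0) * g p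
      = ∑ q : {p : Fin J × Fin L // p.1 ∈ σ}, f q * g q.1 := by
  rw [← sum_dite_subtype (fun q => f q * g q.1)]
  congr 1; ext p
  by_cases h : p.1 ∈ σ <;> simp [h]


lemma sum_extend {n m : Type*} [Fintype n] [Fintype m] [DecidableEq n]
    (f : m → n) (x : m → ℝ) (g : n → ℝ) :
    ∑ i, (∑ k, if f k = i then x k else 0) * g i = ∑ k, x k * g (f k) := by
  simp only [Finset.sum_mul, ite_mul, zero_mul]
  rw [Finset.sum_comm]
  simp [Finset.sum_ite_eq]

lemma posDef_submatrix_inj {n m : Type*} [Fintype n] [Fintype m] [DecidableEq m]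
    [DecidableEq n] {M : Matrix n n ℝ} (hM : M.PosDef) {f : m → n}
    (hf : Function.Injective f) : (M.submatrix f f).PosDef := by
  refine Matrix.PosDef.of_dotProduct_mulVec_pos (hM.1.submatrix f) fun x hx => ?_
  set y : n → ℝ := fun i => ∑ k, if f k = i then x k else 0 with hy
  have hyf : ∀ k, y (f k) = x k := by
    intro k
    simp only [hy, hf.eq_iff]
    simp [Finset.sum_ite_eq]
  have hyne : y ≠ 0 := by
    obtain ⟨k, hk⟩ := Function.ne_iff.mp hx
    exact Function.ne_iff.mpr ⟨f k, by simpa [hyf k] using hk⟩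
  have hpos := hM.dotProduct_mulVec_pos hyne
  have hMy : M *ᵥ y = fun i => ∑ l, M i (f l) * x l := by
    funext i
    simp only [mulVec, dotProduct]
    calc ∑ i', M i i' * y i' = ∑ i', y i' * M i i' := by simp [mul_comm]
    _ = ∑ l, x l * M i (f l) := sum_extend f x (M i)
    _ = ∑ l, M i (f l) * x l := by simp [mul_comm]
  have key : star x ⬝ᵥ (M.submatrix f f *ᵥ x) = star y ⬝ᵥ (M *ᵥ y) := by
    simp only [star_trivial, hMy, dotProduct]
    rw [sum_extend f x (fun i => ∑ l, M i (f l) * x l)]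
    simp [mulVec, dotProduct, submatrix_apply, Finset.mul_sum]
  rw [key]; exact hpos

section
variable {J L : ℕ} (K : Matrix (Fin J × Fin L) (Fin J × Fin L) ℝ)
  (π : Fin J → Finset (Fin J))

lemma Ksymm (hK : K.PosDef) : ∀ p q, K q p = K p q := by
  intro p q
  have := congrFun (congrFun hK.1 p) q
  simpa using this

lemma crossK'_eq (hK : K.PosDef) (j : Fin J) (σ : Finset (Fin J)) :
    crossK' K j σ = (crossK K j σ)ᵀ := by
  ext q b; simp [crossK, crossK', Ksymm K hK]


lemma subK_posDef (hK : K.PosDef) (σ : Finset (Fin J)) : (subK K σ).PosDef :=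
  posDef_submatrix_inj hK Subtype.val_injective

lemma subK_symm (hK : K.PosDef) (σ : Finset (Fin J)) : (subK K σ)ᵀ = subK K σ := by
  ext q r; simp [subK, Ksymm K hK]

lemma subK_det (hK : K.PosDef) (σ : Finset (Fin J)) : IsUnit (subK K σ).det :=
  (Matrix.isUnit_iff_isUnit_det _).mp (subK_posDef K hK σ).isUnit

lemma subK_inv_symm (hK : K.PosDef) (σ : Finset (Fin J)) :
    ((subK K σ)⁻¹)ᵀ = (subK K σ)⁻¹ := by
  rw [Matrix.transpose_nonsing_inv, subK_symm K hK]

lemma subK_inv_mul (hK : K.PosDef) (σ : Finset (Fin J)) :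
    (subK K σ)⁻¹ * subK K σ = 1 :=
  Matrix.nonsing_inv_mul _ (subK_det K hK σ)

lemma subK_mul_inv (hK : K.PosDef) (σ : Finset (Fin J)) :
    subK K σ * (subK K σ)⁻¹ = 1 :=
  Matrix.mul_nonsing_inv _ (subK_det K hK σ)


lemma Qblk_transpose (hK : K.PosDef) (j : Fin J) : (Qblk K π j)ᵀ = Qblk K π j := by
  unfold Qblk
  rw [transpose_sub, transpose_mul, transpose_mul, crossK'_eq K hK, transpose_transpose,
    subK_inv_symm K hK, Matrix.mul_assoc]
  congr 1
  ext a b; simp [Ksymm K hK]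

lemma Qblk_posDef (hK : K.PosDef) (hπ : ∀ j, ∀ i ∈ π j, i < j) (j : Fin J) :
    (Qblk K π j).PosDef := by
  have hjπ : j ∉ π j := fun h => lt_irrefl j (hπ j j h)
  refine Matrix.PosDef.of_dotProduct_mulVec_pos ?_ ?_
  · ext a b
    have h := congrFun (congrFun (Qblk_transpose K π hK j) b) a
    simp only [transpose_apply] at h
    simp only [Matrix.conjTranspose_apply, star_trivial]
    exact h.symm
  · intro x hx
    set σ := π j with hσ
    set A := subK K σ with hA
    set w : {p : Fin J × Fin L // p.1 ∈ σ} → ℝ := A⁻¹ *ᵥ (crossK' K j σ *ᵥ x) with hw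
    set v : Fin J × Fin L → ℝ :=
      fun p => (if p.1 = j then x p.2 else 0) - (if h : p.1 ∈ σ then w ⟨p, h⟩ else 0) with hv
    have hvne : v ≠ 0 := by
      obtain ⟨a, ha⟩ := Function.ne_iff.mp hx
      simp only [Pi.zero_apply] at ha
      refine Function.ne_iff.mpr ⟨(j, a), ?_⟩
      simp [hv, hjπ, ha]
    have hpos := hK.dotProduct_mulVec_pos hvne
    -- the quadratic form of v against K
    have hKv0 : ∀ q : {p : Fin J × Fin L // p.1 ∈ σ}, (K *ᵥ v) q.1 = 0 := by
      intro q
      have : (K *ᵥ v) q.1 = ∑ p, v p * K q.1 p := by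
        simp [mulVec, dotProduct, mul_comm]
      rw [this]
      simp only [hv, sub_mul]
      rw [Finset.sum_sub_distrib, sum_block j x (fun p => K q.1 p),
        sum_piblock w (fun p => K q.1 p)]
      have hAw : A *ᵥ w = crossK' K j σ *ᵥ x := by
        rw [hw, Matrix.mulVec_mulVec, subK_mul_inv K hK, Matrix.one_mulVec]
      have h1 : ∑ a, x a * K q.1 (j, a) = (crossK' K j σ *ᵥ x) q := by
        simp [crossK', mulVec, dotProduct, mul_comm]
      have h2 : ∑ r : {p : Fin J × Fin L // p.1 ∈ σ}, w r * K q.1 r.1 = (A *ᵥ w) q := by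
        simp [hA, subK, mulVec, dotProduct, mul_comm]
      rw [h1, h2, hAw, sub_self]
    have hKvj : ∀ a, (K *ᵥ v) (j, a)
        = ((Matrix.of fun a b => K (j, a) (j, b)) *ᵥ x) a
          - ((crossK K j σ * A⁻¹ * crossK' K j σ) *ᵥ x) a := by
      intro a
      have : (K *ᵥ v) (j, a) = ∑ p, v p * K (j, a) p := by
        simp [mulVec, dotProduct, mul_comm]
      rw [this]
      simp only [hv, sub_mul]
      rw [Finset.sum_sub_distrib, sum_block j x (fun p => K (j, a) p),
        sum_piblock w (fun p => K (j, a) p)]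
      have h1 : ∑ b, x b * K (j, a) (j, b)
          = ((Matrix.of fun a b => K (j, a) (j, b)) *ᵥ x) a := by
        simp [mulVec, dotProduct, mul_comm]
      have h2 : ∑ r : {p : Fin J × Fin L // p.1 ∈ σ}, w r * K (j, a) r.1
          = (crossK K j σ *ᵥ w) a := by
        simp only [mulVec, dotProduct, crossK, Matrix.of_apply]
        exact Finset.sum_congr rfl fun r _ => mul_comm _ _
      rw [h1, h2, hw, Matrix.mulVec_mulVec, Matrix.mulVec_mulVec]
    have key : star v ⬝ᵥ (K *ᵥ v) = star x ⬝ᵥ (Qblk K π j *ᵥ x) := by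
      simp only [star_trivial, dotProduct]
      simp only [hv, sub_mul]
      rw [Finset.sum_sub_distrib, sum_block j x (fun p => (K *ᵥ v) p),
        sum_piblock w (fun p => (K *ᵥ v) p)]
      have : ∑ q : {p : Fin J × Fin L // p.1 ∈ σ}, w q * (K *ᵥ v) q.1 = 0 := by
        simp [hKv0]
      rw [this, sub_zero]
      unfold Qblk
      rw [Matrix.sub_mulVec]
      refine Finset.sum_congr rfl fun a _ => ?_
      rw [hKvj a]
      simp only [Pi.sub_apply, mul_sub]
      rfl
    rw [← key]; exact hpos

lemma Qblk_det (hK : K.PosDef) (hπ : ∀ j, ∀ i ∈ π j, i < j) (j : Fin J) :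
    IsUnit (Qblk K π j).det :=
  (Matrix.isUnit_iff_isUnit_det _).mp (Qblk_posDef K π hK hπ j).isUnit

lemma Qblk_mul_inv (hK : K.PosDef) (hπ : ∀ j, ∀ i ∈ π j, i < j) (j : Fin J) :
    Qblk K π j * (Qblk K π j)⁻¹ = 1 :=
  Matrix.mul_nonsing_inv _ (Qblk_det K π hK hπ j)

end

/-- explicit inverse of `Qmat` -/
noncomputable def Qinv {J L : ℕ} (K : Matrix (Fin J × Fin L) (Fin J × Fin L) ℝ)
    (π : Fin J → Finset (Fin J)) :
    Matrix (Fin J × Fin L) (Fin J × Fin L) ℝ :=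
  Matrix.of fun p q => if p.1 = q.1 then (Qblk K π p.1)⁻¹ p.2 q.2 else 0

section
variable {J L : ℕ} (K : Matrix (Fin J × Fin L) (Fin J × Fin L) ℝ)
  (π : Fin J → Finset (Fin J))

lemma Qmat_mul_Qinv (hK : K.PosDef) (hπ : ∀ j, ∀ i ∈ π j, i < j) :
    Qmat K π * Qinv K π = 1 := by
  ext p q
  obtain ⟨i, a⟩ := p; obtain ⟨i', b⟩ := q
  rw [Matrix.mul_apply, Fintype.sum_prod_type]
  simp only [Qmat, Qinv, Matrix.of_apply, ite_mul, zero_mul, mul_ite, mul_zero]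
  rw [Finset.sum_comm]
  simp only [Finset.sum_ite_eq', Finset.mem_univ, if_true]
  by_cases h : i = i'
  · subst h
    have hm := congrFun (congrFun (Qblk_mul_inv K π hK hπ i) a) b
    rw [Matrix.mul_apply] at hm
    simp [hm, Matrix.one_apply, Prod.ext_iff]
  · simp [h, Matrix.one_apply, Prod.ext_iff]

lemma Qmat_inv (hK : K.PosDef) (hπ : ∀ j, ∀ i ∈ π j, i < j) :
    (Qmat K π)⁻¹ = Qinv K π :=
  Matrix.inv_eq_right_inv (Qmat_mul_Qinv K π hK hπ)

lemma Fmat_apply (hπ : ∀ j, ∀ i ∈ π j, i < j) (j : Fin J) (a : Fin L) (p : Fin J × Fin L) :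
    Fmat K π (j, a) p = (if p = (j, a) then 1 else 0)
      - (if h : p.1 ∈ π j then blockF K π j a ⟨p, h⟩ else 0) := by
  have hjπ : j ∉ π j := fun h => lt_irrefl j (hπ j j h)
  rcases p with ⟨i, c⟩
  by_cases h : j = i
  · subst h
    simp [Fmat, hjπ, Prod.ext_iff, eq_comm]
  · by_cases hm : i ∈ π j
    · simp [Fmat, Ne.symm h, h, hm, Prod.ext_iff]
    · simp [Fmat, Ne.symm h, h, hm, Prod.ext_iff]

lemma FK_apply (hπ : ∀ j, ∀ i ∈ π j, i < j) (j : Fin J) (a : Fin L) (q : Fin J × Fin L) :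
    (Fmat K π * K) (j, a) q
      = K (j, a) q - ∑ r : {p : Fin J × Fin L // p.1 ∈ π j}, blockF K π j a r * K r.1 q := by
  rw [Matrix.mul_apply]
  simp only [Fmat_apply K π hπ, sub_mul, ite_mul, zero_mul, one_mul]
  rw [Finset.sum_sub_distrib]
  congr 1
  · rw [Finset.sum_ite_eq' Finset.univ (j, a) (fun p => K p q)]
    simp
  · exact sum_piblock (fun r => blockF K π j a r) (fun p => K p q)

lemma FK_pi (hK : K.PosDef) (hπ : ∀ j, ∀ i ∈ π j, i < j) (j : Fin J) (a : Fin L)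
    (q : {p : Fin J × Fin L // p.1 ∈ π j}) : (Fmat K π * K) (j, a) q.1 = 0 := by
  rw [FK_apply K π hπ]
  have h1 : ∑ r : {p : Fin J × Fin L // p.1 ∈ π j}, blockF K π j a r * K r.1 q.1
      = (blockF K π j * subK K (π j)) a q := by
    rw [Matrix.mul_apply]; rfl
  have h2 : blockF K π j * subK K (π j) = crossK K j (π j) := by
    unfold blockF
    rw [Matrix.mul_assoc, subK_inv_mul K hK, Matrix.mul_one]
  rw [h1, h2]
  simp [crossK]

lemma FK_diag (hK : K.PosDef) (hπ : ∀ j, ∀ i ∈ π j, i < j) (j : Fin J) (a b : Fin L) :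
    (Fmat K π * K) (j, a) (j, b) = Qblk K π j a b := by
  rw [FK_apply K π hπ]
  have h1 : ∑ r : {p : Fin J × Fin L // p.1 ∈ π j}, blockF K π j a r * K r.1 (j, b)
      = (blockF K π j * crossK' K j (π j)) a b := by
    rw [Matrix.mul_apply]; rfl
  rw [h1]
  rfl

lemma G_diag (hK : K.PosDef) (hπ : ∀ j, ∀ i ∈ π j, i < j) (j : Fin J) (a b : Fin L) :
    ((Fmat K π * K) * (Fmat K π)ᵀ) (j, a) (j, b) = Qblk K π j a b := by
  rw [Matrix.mul_apply]
  simp only [Matrix.transpose_apply, Fmat_apply K π hπ j b, mul_sub, mul_ite, mul_one, mul_zero]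
  rw [Finset.sum_sub_distrib]
  have e1 : ∑ q : Fin J × Fin L, (if q = (j, b) then (Fmat K π * K) (j, a) q else 0)
      = (Fmat K π * K) (j, a) (j, b) := by
    rw [Finset.sum_ite_eq' Finset.univ (j, b) (fun q => (Fmat K π * K) (j, a) q)]
    simp
  have e2 : ∑ q : Fin J × Fin L,
      (if h : q.1 ∈ π j then (Fmat K π * K) (j, a) q * blockF K π j b ⟨q, h⟩ else 0) = 0 := by
    rw [sum_dite_subtype (fun r => (Fmat K π * K) (j, a) r.1 * blockF K π j b r)]
    simp [FK_pi K π hK hπ]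
  rw [e1]
  simp only [mul_dite, mul_zero]
  rw [e2, sub_zero, FK_diag K π hK hπ]


end

/-- The precision `S` of the Gaussian prior approximation built from the conditionals
`p(a_j | a_{π(j)})` of `N(0, K)` is exact on the diagonal against `K`:
`tr(S K) = M`, the dimension. -/
theorem trace_of_approximate_precision {J L : ℕ}
    (K : Matrix (Fin J × Fin L) (Fin J × Fin L) ℝ)
    (π : Fin J → Finset (Fin J))
    (hK : K.PosDef)
    (hπ : ∀ j, ∀ i ∈ π j, i < j) :
    (Smat K π * K).trace = (Fintype.card (Fin J × Fin L) : ℝ) := by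
  unfold Smat
  rw [Qmat_inv K π hK hπ]
  have h1 : (Fmat K π)ᵀ * Qinv K π * Fmat K π * K
      = ((Fmat K π)ᵀ * Qinv K π) * (Fmat K π * K) := by
    rw [Matrix.mul_assoc]
  rw [h1, Matrix.trace_mul_comm, ← Matrix.mul_assoc]
  have key : ∀ (j : Fin J) (a : Fin L),
      ((Fmat K π * K * (Fmat K π)ᵀ) * Qinv K π) (j, a) (j, a)
        = ∑ b, (Fmat K π * K * (Fmat K π)ᵀ) (j, a) (j, b) * (Qblk K π j)⁻¹ b a := by
    intro j a
    rw [Matrix.mul_apply, Fintype.sum_prod_type]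
    simp only [Qinv, Matrix.of_apply, mul_ite, mul_zero]
    rw [Finset.sum_comm]
    simp only [Finset.sum_ite_eq', Finset.mem_univ, if_true]
  have h2 : (Fmat K π * K * (Fmat K π)ᵀ * Qinv K π).trace
      = ∑ j : Fin J, ∑ a : Fin L, ∑ b : Fin L, Qblk K π j a b * (Qblk K π j)⁻¹ b a := by
    rw [Matrix.trace]
    simp only [Matrix.diag]
    rw [Fintype.sum_prod_type]
    refine Finset.sum_congr rfl fun j _ => Finset.sum_congr rfl fun a _ => ?_
    rw [key j a]
    refine Finset.sum_congr rfl fun b _ => ?_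
    rw [G_diag K π hK hπ]
  rw [h2]
  have h3 : ∀ j : Fin J, ∑ a : Fin L, ∑ b : Fin L,
      Qblk K π j a b * (Qblk K π j)⁻¹ b a = (L : ℝ) := by
    intro j
    have ht : ∑ a : Fin L, ∑ b : Fin L, Qblk K π j a b * (Qblk K π j)⁻¹ b a
        = (Qblk K π j * (Qblk K π j)⁻¹).trace := by
      rw [Matrix.trace]
      simp [Matrix.diag, Matrix.mul_apply]
    rw [ht, Qblk_mul_inv K π hK hπ j, Matrix.trace_one]
    simp
  simp only [h3]
  simp [Fintype.card_prod, mul_comm]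
end

section
/- Let K be a symmetric positive definite matrix indexed by blocks, and let π₁ ⊆ π₂ be two disjoint-from-j index sets. Then det( K_{jj} − K_{j,π₂} K_{π₂,π₂}⁻¹ K_{π₂,j} ) ≤ det( K_{jj} − K_{j,π₁} K_{π₁,π₁}⁻¹ K_{π₁,j} ), i.e. the determinant of the Schur complement (conditional covariance) is monotone nonincreasing in the conditioning set. -/
open Matrix

/-- Submatrix of `K` with rows in `σ` and columns in `τ`. -/
noncomputable def Ksub {ι : Type*} [Fintype ι] [DecidableEq ι]
    (K : Matrix ι ι ℝ) (σ τ : Finset ι) :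
    Matrix {i : ι // i ∈ σ} {i : ι // i ∈ τ} ℝ :=
  K.submatrix Subtype.val Subtype.val

/-- Schur complement (conditional covariance) of the block `b` given the blocks `φ`. -/
noncomputable def schurC {ι : Type*} [Fintype ι] [DecidableEq ι]
    (K : Matrix ι ι ℝ) (b φ : Finset ι) :
    Matrix {i : ι // i ∈ b} {i : ι // i ∈ b} ℝ :=
  Ksub K b b - Ksub K b φ * (Ksub K φ φ)⁻¹ * Ksub K φ b

set_option linter.unusedSectionVars false

section Aux

variable {ι : Type*} [Fintype ι] [DecidableEq ι]

/-- The embedding matrix of a finset. -/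
noncomputable def Pmat (σ : Finset ι) : Matrix ι {i : ι // i ∈ σ} ℝ :=
  Matrix.of fun i j => if i = (j : ι) then 1 else 0

lemma Pmat_mulVec (σ : Finset ι) (u : {i : ι // i ∈ σ} → ℝ) (i : ι) :
    (Pmat σ *ᵥ u) i = if h : i ∈ σ then u ⟨i, h⟩ else 0 := by
  unfold Pmat mulVec dotProduct
  by_cases h : i ∈ σ
  · rw [dif_pos h, Finset.sum_eq_single (⟨i, h⟩ : {i : ι // i ∈ σ})]
    · simp
    · intro j _ hj
      have : i ≠ (j : ι) := by rintro rfl; exact hj (Subtype.ext rfl)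
      simp [this]
    · simp
  · rw [dif_neg h]
    apply Finset.sum_eq_zero
    intro j _
    have : i ≠ (j : ι) := fun he => h (he ▸ j.2)
    simp [this]

lemma transpose_Pmat_mul_mul (M : Matrix ι ι ℝ) (σ τ : Finset ι) :
    (Pmat σ)ᵀ * M * Pmat τ = M.submatrix Subtype.val Subtype.val := by
  ext a c
  simp [Pmat, Matrix.mul_apply, ite_mul, mul_ite]

lemma dot_Pmat (M : Matrix ι ι ℝ) (σ τ : Finset ι) (u : {i : ι // i ∈ σ} → ℝ)
    (w : {i : ι // i ∈ τ} → ℝ) :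
    (Pmat σ *ᵥ u) ⬝ᵥ (M *ᵥ (Pmat τ *ᵥ w)) = u ⬝ᵥ (Ksub M σ τ *ᵥ w) := by
  show _ = u ⬝ᵥ (M.submatrix Subtype.val Subtype.val *ᵥ w)
  rw [← transpose_Pmat_mul_mul M σ τ, ← mulVec_mulVec, ← mulVec_mulVec,
    mulVec_transpose, dotProduct_comm u, ← dotProduct_mulVec, dotProduct_comm]

lemma Ksub_posDef {K : Matrix ι ι ℝ} (hK : K.PosDef) (σ : Finset ι) :
    (Ksub K σ σ).PosDef := by
  refine posDef_iff_dotProduct_mulVec.mpr ⟨?_, fun x hx => ?_⟩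
  · have := hK.1
    unfold Ksub
    rw [IsHermitian, conjTranspose_submatrix, this.eq]
  · have hv : Pmat σ *ᵥ x ≠ 0 := by
      obtain ⟨j, hj⟩ := Function.ne_iff.1 hx
      intro h0
      have := congrFun h0 (j : ι)
      rw [Pmat_mulVec, dif_pos j.2] at this
      exact hj (by simpa using this)
    have h := (posDef_iff_dotProduct_mulVec.mp hK).2 hv
    rwa [star_trivial, dot_Pmat K σ σ x x] at h

lemma conjTranspose_Ksub {K : Matrix ι ι ℝ} (hK : K.IsHermitian) (σ τ : Finset ι) :
    (Ksub K σ τ)ᴴ = Ksub K τ σ := by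
  unfold Ksub; rw [conjTranspose_submatrix, hK.eq]

lemma quad_key {K : Matrix ι ι ℝ} (hK : K.PosDef) (b φ : Finset ι)
    (x : {i : ι // i ∈ b} → ℝ) (y : {i : ι // i ∈ φ} → ℝ) :
    (Pmat b *ᵥ x + Pmat φ *ᵥ y) ⬝ᵥ (K *ᵥ (Pmat b *ᵥ x + Pmat φ *ᵥ y)) =
      (((Ksub K φ φ)⁻¹ * Ksub K φ b) *ᵥ x + y) ⬝ᵥ
        (Ksub K φ φ *ᵥ (((Ksub K φ φ)⁻¹ * Ksub K φ b) *ᵥ x + y))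
      + x ⬝ᵥ (schurC K b φ *ᵥ x) := by
  have hC : (Ksub K φ φ).PosDef := Ksub_posDef hK φ
  haveI : Invertible (Ksub K φ φ) :=
    (Ksub K φ φ).invertibleOfIsUnitDet hC.det_pos.ne'.isUnit
  have hBH : (Ksub K b φ)ᴴ = Ksub K φ b := conjTranspose_Ksub hK.1 b φ
  have key := schur_complement_eq₂₂ (α := ℝ) (Ksub K b b) (Ksub K b φ) x y hC.1
  rw [hBH] at key
  simp only [star_trivial, vecMul_fromBlocks, sumElim_dotProduct_sumElim,
    add_dotProduct, ← dotProduct_mulVec, Sum.elim_comp_inl, Sum.elim_comp_inr] at key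
  rw [mulVec_add, dotProduct_add, add_dotProduct, add_dotProduct,
    dot_Pmat K b b x x, dot_Pmat K b φ x y, dot_Pmat K φ b y x, dot_Pmat K φ φ y y]
  unfold schurC
  rw [add_dotProduct]
  linarith [key]


lemma schurC_isHermitian {K : Matrix ι ι ℝ} (hK : K.PosDef) (b φ : Finset ι) :
    (schurC K b φ).IsHermitian := by
  have hC : (Ksub K φ φ).IsHermitian := (Ksub_posDef hK φ).1
  have hBH : (Ksub K b φ)ᴴ = Ksub K φ b := conjTranspose_Ksub hK.1 b φ
  have hA : (Ksub K b b).IsHermitian := conjTranspose_Ksub hK.1 b b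
  unfold schurC
  refine hA.sub ?_
  rw [IsHermitian, conjTranspose_mul, conjTranspose_mul, conjTranspose_nonsing_inv,
    hBH, hC.eq, conjTranspose_Ksub hK.1, Matrix.mul_assoc]

lemma schurC_quad (K : Matrix ι ι ℝ) (hK : K.PosDef) (b φ : Finset ι)
    (x : {i : ι // i ∈ b} → ℝ) :
    x ⬝ᵥ (schurC K b φ *ᵥ x) =
      (Pmat b *ᵥ x + Pmat φ *ᵥ (-(((Ksub K φ φ)⁻¹ * Ksub K φ b) *ᵥ x))) ⬝ᵥ
        (K *ᵥ (Pmat b *ᵥ x + Pmat φ *ᵥ (-(((Ksub K φ φ)⁻¹ * Ksub K φ b) *ᵥ x)))) := by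
  rw [quad_key hK b φ x (-(((Ksub K φ φ)⁻¹ * Ksub K φ b) *ᵥ x))]
  simp

lemma schurC_posSemidef {K : Matrix ι ι ℝ} (hK : K.PosDef) (b φ : Finset ι) :
    (schurC K b φ).PosSemidef := by
  refine posSemidef_iff_dotProduct_mulVec.mpr ⟨schurC_isHermitian hK b φ, fun x => ?_⟩
  rw [star_trivial, schurC_quad K hK b φ x]
  have := hK.posSemidef.dotProduct_mulVec_nonneg (Pmat b *ᵥ x + Pmat φ *ᵥ (-(((Ksub K φ φ)⁻¹ * Ksub K φ b) *ᵥ x)))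
  rwa [star_trivial] at this

lemma schurC_sub_posSemidef {K : Matrix ι ι ℝ} (hK : K.PosDef) (b π1 π2 : Finset ι)
    (hsub : π1 ⊆ π2) :
    (schurC K b π1 - schurC K b π2).PosSemidef := by
  refine posSemidef_iff_dotProduct_mulVec.mpr ⟨(schurC_isHermitian hK b π1).sub (schurC_isHermitian hK b π2), fun x => ?_⟩
  rw [star_trivial, sub_mulVec, dotProduct_sub, sub_nonneg]
  set y1 : {i : ι // i ∈ π1} → ℝ := -(((Ksub K π1 π1)⁻¹ * Ksub K π1 b) *ᵥ x) with hy1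
  set y2 : {i : ι // i ∈ π2} → ℝ :=
    fun j => if h : (j : ι) ∈ π1 then y1 ⟨j, h⟩ else 0 with hy2
  have hPv : Pmat π1 *ᵥ y1 = Pmat π2 *ᵥ y2 := by
    funext i
    rw [Pmat_mulVec, Pmat_mulVec]
    by_cases h1 : i ∈ π1
    · rw [dif_pos h1, dif_pos (hsub h1), hy2]
      simp [h1]
    · rw [dif_neg h1]
      by_cases h2 : i ∈ π2
      · rw [dif_pos h2, hy2]; simp [h1]
      · rw [dif_neg h2]
  have e1 : x ⬝ᵥ (schurC K b π1 *ᵥ x) =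
      (Pmat b *ᵥ x + Pmat π2 *ᵥ y2) ⬝ᵥ (K *ᵥ (Pmat b *ᵥ x + Pmat π2 *ᵥ y2)) := by
    rw [schurC_quad K hK b π1 x, ← hy1, hPv]
  rw [e1, quad_key hK b π2 x y2]
  have hC2 : (Ksub K π2 π2).PosSemidef := (Ksub_posDef hK π2).posSemidef
  have := hC2.dotProduct_mulVec_nonneg (((Ksub K π2 π2)⁻¹ * Ksub K π2 b) *ᵥ x + y2)
  rw [star_trivial] at this
  linarith

end Aux

section Det

variable {n : Type*} [Fintype n] [DecidableEq n]

lemma psd_det_nonneg {A : Matrix n n ℝ} (hA : A.PosSemidef) : 0 ≤ A.det := by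
  exact hA.det_nonneg

lemma one_le_det_one_add_psd {E : Matrix n n ℝ} (hE : E.PosSemidef) :
    1 ≤ (1 + E).det := by
  have hsp := hE.1.spectral_theorem
  set U : Matrix n n ℝ := (hE.1.eigenvectorUnitary : Matrix n n ℝ) with hU
  have hUU : U * star U = 1 := Matrix.mem_unitaryGroup_iff.mp hE.1.eigenvectorUnitary.2
  have h1 : (1 : Matrix n n ℝ) + E =
      U * (1 + diagonal (RCLike.ofReal ∘ hE.1.eigenvalues)) * star U := by
    rw [Matrix.mul_add, Matrix.add_mul, Matrix.mul_one, hUU]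
    conv_lhs => rw [hsp, Unitary.conjStarAlgAut_apply]
  rw [h1, det_mul, det_mul, mul_right_comm, ← det_mul, hUU, det_one, one_mul]
  have : (1 : Matrix n n ℝ) + diagonal (RCLike.ofReal ∘ hE.1.eigenvalues) =
      diagonal (fun i => 1 + hE.1.eigenvalues i) := by
    rw [← diagonal_one, diagonal_add]
    rfl
  rw [this, det_diagonal]
  calc (1 : ℝ) = ∏ _i : n, 1 := by simp
    _ ≤ _ := Finset.prod_le_prod (by simp) (fun i _ => by
        have := hE.eigenvalues_nonneg i; linarith)

open scoped MatrixOrder in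
lemma det_le_det_add_psd {A D : Matrix n n ℝ} (hA : A.PosSemidef) (hD : D.PosSemidef) :
    A.det ≤ (A + D).det := by
  rcases eq_or_lt_of_le (psd_det_nonneg hA) with h0 | hpos
  · rw [← h0]
    exact psd_det_nonneg (hA.add hD)
  · set S := CFC.sqrt A with hS
    have hSS : S * S = A := CFC.sqrt_mul_sqrt_self A hA.nonneg
    have hSdet : S.det ≠ 0 := by
      intro h
      rw [← hSS, det_mul, h, mul_zero] at hpos
      exact lt_irrefl _ hpos
    have hSunit : IsUnit S.det := isUnit_iff_ne_zero.2 hSdet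
    have hSH : S⁻¹.IsHermitian := (CFC.sqrt_nonneg A).posSemidef.1.inv
    have hE : (S⁻¹ * D * S⁻¹).PosSemidef := by
      have h := hD.conjTranspose_mul_mul_same S⁻¹
      rwa [hSH.eq] at h
    have h1 : A + D = S * (1 + S⁻¹ * D * S⁻¹) * S := by
      rw [Matrix.mul_add, Matrix.add_mul, Matrix.mul_one, hSS]
      congr 1
      have hcal : S * (S⁻¹ * D * S⁻¹) * S = (S * S⁻¹) * D * (S⁻¹ * S) := by
        simp only [Matrix.mul_assoc]
      rw [hcal, mul_nonsing_inv _ hSunit, nonsing_inv_mul _ hSunit, Matrix.one_mul,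
        Matrix.mul_one]
    rw [h1, det_mul, det_mul]
    have h2 : S.det * S.det = A.det := by rw [← det_mul, hSS]
    nlinarith [one_le_det_one_add_psd hE]

end Det

/-- The determinant of the Schur complement is monotone nonincreasing in the
conditioning set. -/
theorem schur_det_monotone {ι : Type*} [Fintype ι] [DecidableEq ι]
    (K : Matrix ι ι ℝ) (hK : K.PosDef)
    (b π1 π2 : Finset ι)
    (hsub : π1 ⊆ π2) (hdisj : Disjoint π2 b) :
    (schurC K b π2).det ≤ (schurC K b π1).det := by
  have hdiff := schurC_sub_posSemidef hK b π1 π2 hsub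
  have h2 := schurC_posSemidef hK b π2
  have h := det_le_det_add_psd h2 hdiff
  have e : schurC K b π2 + (schurC K b π1 - schurC K b π2) = schurC K b π1 := by abel
  rwa [e] at h
end
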